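/- Let L be positive semi-definite, indexed by Y partitioned into Y_1,...,Y_m with L_{Y_i,Y_j} = 0 for |i−j| ≥ 2. Fix Ĉ_{1:i-1} = Ĉ_1 ∪ ... ∪ Ĉ_{i-1} with Ĉ_j ⊆ Y_j, and assume L_{Ĉ_{1:i-1}} is invertible. Then the conditional kernel (L_{Y_1∪...∪Y_i} | Ĉ_{1:i-1} ⊆ Y', complement of Ĉ_{1:i-1} in Y_1∪...∪Y_{i-1} disjoint from Y'), restricted to Y_i, equals L_{Y_i} − (L_{Ĉ_{i-1}, Y_i})^T (L̃_{Ĉ_{i-1}})^{-1} L_{Ĉ_{i-1}, Y_i}, where L̃_{Ĉ_{i-1}} is defined by the recursion L̃_{Ĉ_1} = L_{Ĉ_1}, L̃_{Ĉ_j} = L_{Ĉ_j} − (L_{Ĉ_{j-1},Ĉ_j})^T (L̃_{Ĉ_{j-1}})^{-1} L_{Ĉ_{j-1},Ĉ_j}. -/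

import Mathlib

open Matrix

/-- Principal/rectangular submatrix of `L` with rows indexed by `A` and columns by `B`. -/
def subm {N : ℕ} (L : Matrix (Fin N) (Fin N) ℝ) (A B : Finset (Fin N)) :
    Matrix A B ℝ := Matrix.of fun i j => L i.1 j.1

/-- Principal submatrix of a matrix indexed by `A`, restricted to `B ⊆ A`. -/
def subm2 {N : ℕ} {A B : Finset (Fin N)} (M : Matrix A A ℝ) (h : B ⊆ A) :
    Matrix B B ℝ := Matrix.of fun i j => M ⟨i.1, h i.2⟩ ⟨j.1, h j.2⟩

/-- `Ĉ_{1:i-1} = Ĉ_0 ∪ ⋯ ∪ Ĉ_{i-1}` (0-based: the first `i` parts). -/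
def hatC {N : ℕ} (Ci : ℕ → Finset (Fin N)) (i : ℕ) : Finset (Fin N) :=
  (Finset.range i).biUnion Ci

/-- The matrix `L_{Ĉ_{1:i-1} ∪ Y_i} + I_{·∉Ĉ_{1:i-1}}` appearing in the conditional
kernel formula (here `Ĉ_{1:i-1} ∪ Y_i` is the complement of `A^{out}` inside
`Y_1 ∪ ⋯ ∪ Y_i`, and the identity part is supported off `A^{in} = Ĉ_{1:i-1}`). -/
def bwCondM {N : ℕ} (L : Matrix (Fin N) (Fin N) ℝ) (Ci Y : ℕ → Finset (Fin N)) (i : ℕ) :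
    Matrix ((hatC Ci i ∪ Y i) : Finset (Fin N)) ((hatC Ci i ∪ Y i) : Finset (Fin N)) ℝ :=
  subm L (hatC Ci i ∪ Y i) (hatC Ci i ∪ Y i)
    + Matrix.of fun a b => if a = b ∧ a.1 ∉ hatC Ci i then (1 : ℝ) else 0

/-- The conditional kernel restricted to `Y_i`. -/
noncomputable def bwCondK {N : ℕ} (L : Matrix (Fin N) (Fin N) ℝ)
    (Ci Y : ℕ → Finset (Fin N)) (i : ℕ) : Matrix (Y i) (Y i) ℝ :=
  (subm2 ((bwCondM L Ci Y i)⁻¹) Finset.subset_union_right)⁻¹ - 1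

def uEquiv {N : ℕ} (A B : Finset (Fin N)) (h : Disjoint A B) :
    (A : Type) ⊕ (B : Type) ≃ ((A ∪ B : Finset (Fin N)) : Type) where
  toFun := Sum.elim (fun a => ⟨a.1, Finset.mem_union_left _ a.2⟩)
    (fun b => ⟨b.1, Finset.mem_union_right _ b.2⟩)
  invFun := fun x => if hx : x.1 ∈ A then Sum.inl ⟨x.1, hx⟩ else
    Sum.inr ⟨x.1, by
      rcases Finset.mem_union.mp x.2 with h' | h'
      · exact absurd h' hx
      · exact h'⟩
  left_inv := by
    rintro (a | b)
    · simp [a.2]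
    · have : b.1 ∉ A := fun hb => Finset.disjoint_left.mp h hb b.2
      simp [this]
  right_inv := by
    rintro x
    by_cases hx : x.1 ∈ A <;> simp [hx]

lemma hatC_zero {N : ℕ} (Ci : ℕ → Finset (Fin N)) : hatC Ci 0 = ∅ := by simp [hatC]

lemma hatC_succ {N : ℕ} (Ci : ℕ → Finset (Fin N)) (j : ℕ) :
    hatC Ci (j + 1) = hatC Ci j ∪ Ci j := by
  simp [hatC, Finset.range_add_one, Finset.biUnion_insert, Finset.union_comm]

lemma subm_union_eq {N : ℕ} (L : Matrix (Fin N) (Fin N) ℝ) (A B : Finset (Fin N))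
    (h : Disjoint A B) :
    (subm L (A ∪ B) (A ∪ B)).submatrix (uEquiv A B h) (uEquiv A B h)
      = fromBlocks (subm L A A) (subm L A B) (subm L B A) (subm L B B) := by
  ext (a | b) (a' | b') <;> rfl

lemma subm2_eq_toBlocks₂₂ {N : ℕ} {A B : Finset (Fin N)} (h : Disjoint A B)
    (M : Matrix ((A ∪ B : Finset (Fin N)) : Type) ((A ∪ B : Finset (Fin N)) : Type) ℝ) :
    subm2 M (Finset.subset_union_right)
      = (M.submatrix (uEquiv A B h) (uEquiv A B h)).toBlocks₂₂ := by
  ext b b'; rfl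

lemma schur22 {a b : Type} [Fintype a] [Fintype b] [DecidableEq a] [DecidableEq b]
    (A : Matrix a a ℝ) (B : Matrix a b ℝ) (C : Matrix b a ℝ) (D : Matrix b b ℝ)
    (hA : IsUnit A.det) (hM : IsUnit (fromBlocks A B C D).det) :
    ((fromBlocks A B C D)⁻¹).toBlocks₂₂ = (D - C * A⁻¹ * B)⁻¹
      ∧ IsUnit (D - C * A⁻¹ * B).det := by
  haveI := A.invertibleOfIsUnitDet hA
  haveI := (fromBlocks A B C D).invertibleOfIsUnitDet hM
  haveI := Matrix.invertibleOfFromBlocks₁₁Invertible A B C D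
  have hi : ⅟A = A⁻¹ := invOf_eq_nonsing_inv A
  haveI hS : Invertible (D - C * A⁻¹ * B) := by rw [← hi]; infer_instance
  constructor
  · rw [← invOf_eq_nonsing_inv, Matrix.invOf_fromBlocks₁₁_eq, Matrix.toBlocks_fromBlocks₂₂,
      invOf_eq_nonsing_inv, hi]
  · exact isUnit_det_of_invertible _

lemma inv22 {N : ℕ} {A B : Finset (Fin N)} (h : Disjoint A B)
    (M : Matrix ((A ∪ B : Finset (Fin N)) : Type) ((A ∪ B : Finset (Fin N)) : Type) ℝ)
    (P : Matrix A A ℝ) (Q : Matrix A B ℝ) (R : Matrix B A ℝ) (S : Matrix B B ℝ)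
    (hb : M.submatrix (uEquiv A B h) (uEquiv A B h) = fromBlocks P Q R S)
    (hM : IsUnit M.det) (hP : IsUnit P.det) :
    (M⁻¹.submatrix (uEquiv A B h) (uEquiv A B h)).toBlocks₂₂ = (S - R * P⁻¹ * Q)⁻¹
      ∧ IsUnit (S - R * P⁻¹ * Q).det := by
  have h1 : M⁻¹.submatrix (uEquiv A B h) (uEquiv A B h)
      = (M.submatrix (uEquiv A B h) (uEquiv A B h))⁻¹ := (Matrix.inv_submatrix_equiv M _ _).symm
  have hM' : IsUnit (fromBlocks P Q R S).det := by
    rw [← hb, Matrix.det_submatrix_equiv_self]; exact hM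
  rw [h1, hb]
  exact schur22 P Q R S hP hM'

lemma triple_reduce {N : ℕ} {A B D : Finset (Fin N)} (h : Disjoint A B)
    (X : Matrix D ((A ∪ B : Finset (Fin N)) : Type) ℝ)
    (M : Matrix ((A ∪ B : Finset (Fin N)) : Type) ((A ∪ B : Finset (Fin N)) : Type) ℝ)
    (Y : Matrix ((A ∪ B : Finset (Fin N)) : Type) D ℝ)
    (hX : ∀ d a, X d ((uEquiv A B h) (Sum.inl a)) = 0)
    (hY : ∀ a d, Y ((uEquiv A B h) (Sum.inl a)) d = 0) :
    X * M * Y = X.submatrix id ((uEquiv A B h) ∘ Sum.inr)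
      * (M.submatrix (uEquiv A B h) (uEquiv A B h)).toBlocks₂₂
      * Y.submatrix ((uEquiv A B h) ∘ Sum.inr) id := by
  set e := uEquiv A B h with he
  have h1 : X.submatrix id ⇑e = fromCols 0 (X.submatrix id (⇑e ∘ Sum.inr)) := by
    ext d (a | b)
    · simpa using hX d a
    · rfl
  have h2 : Y.submatrix ⇑e id = fromRows 0 (Y.submatrix (⇑e ∘ Sum.inr) id) := by
    ext (a | b) d
    · simpa using hY a d
    · rfl
  have h3 : M.submatrix ⇑e ⇑e = fromBlocks (M.submatrix ⇑e ⇑e).toBlocks₁₁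
      (M.submatrix ⇑e ⇑e).toBlocks₁₂ (M.submatrix ⇑e ⇑e).toBlocks₂₁
      (M.submatrix ⇑e ⇑e).toBlocks₂₂ := (Matrix.fromBlocks_toBlocks _).symm
  calc X * M * Y = (X * M * Y).submatrix id id := by rw [Matrix.submatrix_id_id]
    _ = X.submatrix id ⇑e * M.submatrix ⇑e ⇑e * Y.submatrix ⇑e id := by
        rw [Matrix.submatrix_mul_equiv, Matrix.submatrix_mul_equiv]
    _ = _ := by
        rw [h1, h2]
        nth_rewrite 1 [h3]
        rw [fromCols_mul_fromBlocks, fromCols_mul_fromRows]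
        simp

/-- For a block tridiagonal PSD kernel `L`, the conditional kernel of
`L_{Y_1∪⋯∪Y_i}` given `Ĉ_{1:i-1}` in and the rest of `Y_1∪⋯∪Y_{i-1}` out, restricted to
`Y_i`, equals `L_{Y_i} − (L_{Ĉ_{i-1},Y_i})ᵀ (L̃_{Ĉ_{i-1}})⁻¹ L_{Ĉ_{i-1},Y_i}` where `L̃`
satisfies the Schur-complement recursion. -/
theorem stmt9 {N m : ℕ} (L : Matrix (Fin N) (Fin N) ℝ) (hL : L.PosSemidef)
    (Y : ℕ → Finset (Fin N))
    (hdisj : ∀ i < m, ∀ j < m, i ≠ j → Disjoint (Y i) (Y j))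
    (hcover : (Finset.range m).biUnion Y = Finset.univ)
    (htri : ∀ i < m, ∀ j < m, i + 2 ≤ j →
      ∀ a ∈ Y i, ∀ b ∈ Y j, L a b = 0 ∧ L b a = 0)
    (Ci : ℕ → Finset (Fin N)) (hCi : ∀ i < m, Ci i ⊆ Y i)
    (Lt : (i : ℕ) → Matrix (Ci i) (Ci i) ℝ)
    (hLt0 : Lt 0 = subm L (Ci 0) (Ci 0))
    (hLtS : ∀ j, 0 < j → j < m →
      Lt j = subm L (Ci j) (Ci j)
        - (subm L (Ci (j - 1)) (Ci j))ᵀ * (Lt (j - 1))⁻¹ * subm L (Ci (j - 1)) (Ci j))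
    (hinvLt : ∀ j < m, IsUnit (Lt j).det)
    (hinvC : ∀ j < m, IsUnit (subm L (hatC Ci j) (hatC Ci j)).det)
    (i : ℕ) (hi1 : 1 ≤ i) (him : i < m)
    (hinvM : IsUnit (bwCondM L Ci Y i).det)
    (hinvMi : IsUnit (subm2 ((bwCondM L Ci Y i)⁻¹)
      (Finset.subset_union_right : Y i ⊆ hatC Ci i ∪ Y i)).det) :
    bwCondK L Ci Y i
      = subm L (Y i) (Y i)
        - (subm L (Ci (i - 1)) (Y i))ᵀ * (Lt (i - 1))⁻¹ * subm L (Ci (i - 1)) (Y i) := by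
  have hsym : ∀ a b, L a b = L b a := by
    intro a b
    have := congrFun (congrFun hL.1 a) b
    simpa [Matrix.conjTranspose_apply] using this.symm
  have hsubmT : ∀ (A B : Finset (Fin N)), (subm L A B)ᵀ = subm L B A := by
    intro A B; ext x y; exact hsym y.1 x.1
  have hdis : ∀ j, j < m → ∀ S : Finset (Fin N), S ⊆ Y j → Disjoint (hatC Ci j) S := by
    intro j hj S hS
    rw [Finset.disjoint_left]
    intro x hx hxS
    obtain ⟨k, hk, hxk⟩ := Finset.mem_biUnion.mp hx
    have hk' : k < j := Finset.mem_range.mp hk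
    exact Finset.disjoint_left.mp (hdisj k (by omega) j hj (by omega))
      (hCi k (by omega) hxk) (hS hxS)
  have IND : ∀ j, 1 ≤ j → j < m → ∀ B : Finset (Fin N), B ⊆ Y j →
      subm L B (hatC Ci j) * (subm L (hatC Ci j) (hatC Ci j))⁻¹ * subm L (hatC Ci j) B
      = subm L B (Ci (j - 1)) * (Lt (j - 1))⁻¹ * subm L (Ci (j - 1)) B := by
    intro j
    induction j with
    | zero => omega
    | succ j ih =>
      intro _ hjm B hBY

      have hd : Disjoint (hatC Ci j) (Ci j) := hdis j (by omega) (Ci j) (hCi j (by omega))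
      have hz : ∀ x ∈ hatC Ci j, ∀ b ∈ B, L b x = 0 ∧ L x b = 0 := by
        intro x hx b hb
        obtain ⟨k, hk, hxk⟩ := Finset.mem_biUnion.mp hx
        have hk' : k < j := Finset.mem_range.mp hk
        have := htri k (by omega) (j + 1) hjm (by omega) x (hCi k (by omega) hxk) b (hBY hb)
        exact ⟨this.2, this.1⟩
      rw [hatC_succ]
      have hMdet : IsUnit (subm L (hatC Ci j ∪ Ci j) (hatC Ci j ∪ Ci j)).det := by
        have := hinvC (j + 1) hjm; rwa [hatC_succ] at this
      rw [triple_reduce hd _ _ _ (fun d a => (hz a.1 a.2 d.1 d.2).1)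
        (fun a d => (hz a.1 a.2 d.1 d.2).2)]
      obtain ⟨h22, -⟩ := inv22 hd (subm L (hatC Ci j ∪ Ci j) (hatC Ci j ∪ Ci j))
        _ _ _ _ (subm_union_eq L _ _ hd) hMdet (hinvC j (by omega))
      rw [h22]
      have hschur : subm L (Ci j) (Ci j)
          - subm L (Ci j) (hatC Ci j) * (subm L (hatC Ci j) (hatC Ci j))⁻¹
            * subm L (hatC Ci j) (Ci j) = Lt j := by
        rcases Nat.eq_zero_or_pos j with hj0 | hj1
        · subst hj0
          have hemp : subm L (Ci 0) (hatC Ci 0) * (subm L (hatC Ci 0) (hatC Ci 0))⁻¹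
              * subm L (hatC Ci 0) (Ci 0) = 0 := by
            haveI : IsEmpty ((hatC Ci 0 : Finset (Fin N)) : Type) := by
              rw [hatC_zero]; exact Finset.isEmpty_coe_sort.mpr rfl
            ext x y; simp [Matrix.mul_apply]
          rw [hemp, sub_zero, hLt0]
        · rw [ih hj1 (by omega) (Ci j) (hCi j (by omega)), ← hsubmT (Ci (j - 1)) (Ci j)]
          exact (hLtS j hj1 (by omega)).symm
      rw [hschur]
      have hX2 : (subm L B (hatC Ci j ∪ Ci j)).submatrix id (⇑(uEquiv _ _ hd) ∘ Sum.inr)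
          = subm L B (Ci j) := by ext d c; rfl
      have hY2 : (subm L (hatC Ci j ∪ Ci j) B).submatrix (⇑(uEquiv _ _ hd) ∘ Sum.inr) id
          = subm L (Ci j) B := by ext c d; rfl
      rw [hX2, hY2]
      rfl
  have hdY : Disjoint (hatC Ci i) (Y i) := hdis i him (Y i) subset_rfl
  have hb : (bwCondM L Ci Y i).submatrix (uEquiv _ _ hdY) (uEquiv _ _ hdY)
      = fromBlocks (subm L (hatC Ci i) (hatC Ci i)) (subm L (hatC Ci i) (Y i))
        (subm L (Y i) (hatC Ci i)) (subm L (Y i) (Y i) + 1) := by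
    ext (a | b) (a' | b')
    · show L a.1 a'.1 + (if _ ∧ a.1 ∉ hatC Ci i then (1:ℝ) else 0) = L a.1 a'.1
      simp [a.2]
    · show L a.1 b'.1 + (if _ ∧ a.1 ∉ hatC Ci i then (1:ℝ) else 0) = L a.1 b'.1
      simp [a.2]
    · show L b.1 a'.1 + (if (⟨b.1, _⟩ : ((hatC Ci i ∪ Y i : Finset (Fin N)) : Type))
          = ⟨a'.1, _⟩ ∧ b.1 ∉ hatC Ci i then (1:ℝ) else 0) = L b.1 a'.1
      have : b.1 ≠ a'.1 := by
        intro h; exact Finset.disjoint_right.mp hdY b.2 (h ▸ a'.2)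
      simp [Subtype.ext_iff, this]
    · show L b.1 b'.1 + (if (⟨b.1, _⟩ : ((hatC Ci i ∪ Y i : Finset (Fin N)) : Type))
          = ⟨b'.1, _⟩ ∧ b.1 ∉ hatC Ci i then (1:ℝ) else 0)
        = L b.1 b'.1 + (if b = b' then (1:ℝ) else 0)
      have hbn : b.1 ∉ hatC Ci i := fun h => Finset.disjoint_left.mp hdY h b.2
      by_cases hbb : b = b'
      · subst hbb; simp [hbn]
      · have hne : b.1 ≠ b'.1 := fun h => hbb (Subtype.ext h)
        simp [hne, hbb]
  obtain ⟨h22, hSdet⟩ := inv22 hdY (bwCondM L Ci Y i) _ _ _ _ hb hinvM (hinvC i him)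
  rw [bwCondK, subm2_eq_toBlocks₂₂ hdY, h22, Matrix.nonsing_inv_nonsing_inv _ hSdet,
    IND i hi1 him (Y i) subset_rfl, ← hsubmT (Ci (i - 1)) (Y i)]
  abel
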